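/- Let C be an exact inverse category and f : A → B a morphism of C. Then: (i) P′(f)(j₁ ∘ j₂) = P′(f)(j₁) ∘ P′(f)(j₂) for all projections j₁, j₂ on B; (ii) j₁ ≤ j₂ implies P′(f)(j₁) ≤ P′(f)(j₂); (iii) f′ ≤ P′(f)(j) for every projection j on B; (iv) if f ∘ f* ≤ j then P′(f)(j) = 1_A. -/
import Mathlib


open CategoryTheory CategoryTheory.Limits

universe v u

/-- An operation assigning to each morphism a morphism in the opposite direction. -/
def MorphismOp (C : Type u) [Category.{v} C] : Type (max u v) :=
  ∀ {A B : C}, (A ⟶ B) → (B ⟶ A)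

variable {C : Type u} [Category.{v} C]

/-- `s` is an involution: a contravariant endofunctor which is the identity on objects
and involutive on morphisms. -/
def IsInvolution (s : MorphismOp C) : Prop :=
  (∀ {A B D : C} (f : A ⟶ B) (g : B ⟶ D), s (f ≫ g) = s g ≫ s f) ∧
  (∀ A : C, s (𝟙 A) = 𝟙 A) ∧
  (∀ {A B : C} (f : A ⟶ B), s (s f) = f)

/-- A projection on `A` is an idempotent endomorphism fixed by the involution `s`. -/
def IsProjection (s : MorphismOp C) {A : C} (i : A ⟶ A) : Prop :=
  i ≫ i = i ∧ s i = i

/-- `g` is a Moore–Penrose generalized inverse of `f` with respect to `s`: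
`f g f = f`, `g f g = g`, `(f g)* = f g`, `(g f)* = g f`. -/
def IsMoorePenrose (s : MorphismOp C) {A B : C} (f : A ⟶ B) (g : B ⟶ A) : Prop :=
  f ≫ g ≫ f = f ∧ g ≫ f ≫ g = g ∧ s (f ≫ g) = f ≫ g ∧ s (g ≫ f) = g ≫ f

/-- `inv` makes `C` an inverse category: each morphism `f` has `inv f` as its unique
generalized inverse (`f ∘ (inv f) ∘ f = f` and `(inv f) ∘ f ∘ (inv f) = inv f`). -/
def IsInverseOp (inv : MorphismOp C) : Prop :=
  ∀ {A B : C} (f : A ⟶ B),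
    (f ≫ inv f ≫ f = f ∧ inv f ≫ f ≫ inv f = inv f) ∧
    ∀ g : B ⟶ A, f ≫ g ≫ f = f → g ≫ f ≫ g = g → g = inv f

/-- `u` is a kernel of `f`. -/
def IsKernelOf [HasZeroMorphisms C] {K A B : C} (u : K ⟶ A) (f : A ⟶ B) : Prop :=
  u ≫ f = 0 ∧ ∀ {X : C} (g : X ⟶ A), g ≫ f = 0 → ∃! h : X ⟶ K, h ≫ u = g

/-- `v` is a cokernel of `f`. -/
def IsCokernelOf [HasZeroMorphisms C] {A B Q : C} (v : B ⟶ Q) (f : A ⟶ B) : Prop :=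
  f ≫ v = 0 ∧ ∀ {X : C} (g : B ⟶ X), f ≫ g = 0 → ∃! h : Q ⟶ X, v ≫ h = g

/-- An exact category (in the sense of the paper): a category with a zero object,
kernels and cokernels, in which every monomorphism is a kernel, every epimorphism is a
cokernel, and every morphism factors as a monomorphism composed with an epimorphism. -/
structure IsExactCategory (C : Type u) [Category.{v} C] [HasZeroObject C]
    [HasZeroMorphisms C] : Prop where
  hasKernels : ∀ {A B : C} (f : A ⟶ B), ∃ (K : C) (u : K ⟶ A), IsKernelOf u f
  hasCokernels : ∀ {A B : C} (f : A ⟶ B), ∃ (Q : C) (v : B ⟶ Q), IsCokernelOf v f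
  normal : ∀ {X A : C} (u : X ⟶ A), Mono u → ∃ (B : C) (f : A ⟶ B), IsKernelOf u f
  conormal : ∀ {A B : C} (v : A ⟶ B), Epi v → ∃ (X : C) (f : X ⟶ A), IsCokernelOf v f
  monoEpiFact : ∀ {A B : C} (f : A ⟶ B),
    ∃ (I : C) (q : A ⟶ I) (p : I ⟶ B), Epi q ∧ Mono p ∧ q ≫ p = f

/-- A Baer*-structure on `C` with respect to `s`: each morphism `f` has a projection
`f′ = prj f` on its domain with `f ∘ g = 0` iff `g` factors through `f′`. -/
structure BaerStar (C : Type u) [Category.{v} C] [HasZeroObject C] [HasZeroMorphisms C]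
    (s : MorphismOp C) where
  prj : ∀ {A B : C}, (A ⟶ B) → (A ⟶ A)
  prj_isProjection : ∀ {A B : C} (f : A ⟶ B), IsProjection s (prj f)
  prj_spec : ∀ {A B X : C} (f : A ⟶ B) (g : X ⟶ A),
    g ≫ f = 0 ↔ ∃ h : X ⟶ A, g = h ≫ prj f

/-- The natural partial order on projections: `e ≤ f` iff `e = e ∘ f`. -/
def ProjLe {A : C} (e f : A ⟶ A) : Prop := f ≫ e = e

/-- `p` is the image of `g`: the smallest subobject of the codomain of `g` through
which `g` factors. -/
def IsImageOf {A B I : C} (p : I ⟶ B) (g : A ⟶ B) : Prop :=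
  Mono p ∧ (∃ t : A ⟶ I, t ≫ p = g) ∧
  ∀ {S : C} (t : A ⟶ S) (m : S ⟶ B), Mono m → t ≫ m = g → ∃ w : I ⟶ S, w ≫ m = p


namespace Stmt15Aux

variable {C : Type u} [Category.{v} C]

section Inverse

variable {inv : MorphismOp C}

theorem gi1 (hinv : IsInverseOp inv) {A B : C} (f : A ⟶ B) : f ≫ inv f ≫ f = f := (hinv f).1.1

theorem gi2 (hinv : IsInverseOp inv) {A B : C} (f : A ⟶ B) : inv f ≫ f ≫ inv f = inv f := (hinv f).1.2

theorem inv_uniq (hinv : IsInverseOp inv) {A B : C} (f : A ⟶ B) (g : B ⟶ A)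
    (h1 : f ≫ g ≫ f = f) (h2 : g ≫ f ≫ g = g) : g = inv f := (hinv f).2 g h1 h2

theorem inv_idem (hinv : IsInverseOp inv) {A : C} (e : A ⟶ A) (he : e ≫ e = e) : inv e = e :=
  (inv_uniq hinv e e (by rw [he, he]) (by rw [he, he])).symm

theorem inv_inv (hinv : IsInverseOp inv) {A B : C} (f : A ⟶ B) : inv (inv f) = f :=
  (inv_uniq hinv (inv f) f (gi2 hinv f) (gi1 hinv f)).symm

theorem idem_comp (hinv : IsInverseOp inv) {A : C} (e k : A ⟶ A) (he : e ≫ e = e) (hk : k ≫ k = k) :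
    (e ≫ k) ≫ e ≫ k = e ≫ k := by
  have hz : k ≫ inv (e ≫ k) ≫ e = inv (e ≫ k) := by
    apply inv_uniq hinv
    · calc (e ≫ k) ≫ (k ≫ inv (e ≫ k) ≫ e) ≫ e ≫ k
          = e ≫ (k ≫ k) ≫ inv (e ≫ k) ≫ (e ≫ e) ≫ k := by simp only [Category.assoc]
        _ = (e ≫ k) ≫ inv (e ≫ k) ≫ e ≫ k := by rw [he, hk]; simp only [Category.assoc]
        _ = e ≫ k := gi1 hinv (e ≫ k)
    · calc (k ≫ inv (e ≫ k) ≫ e) ≫ (e ≫ k) ≫ k ≫ inv (e ≫ k) ≫ e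
          = k ≫ inv (e ≫ k) ≫ (e ≫ e) ≫ (k ≫ k) ≫ inv (e ≫ k) ≫ e := by
            simp only [Category.assoc]
        _ = k ≫ (inv (e ≫ k) ≫ (e ≫ k) ≫ inv (e ≫ k)) ≫ e := by
            rw [he, hk]; simp only [Category.assoc]
        _ = k ≫ inv (e ≫ k) ≫ e := by rw [gi2 hinv]
  have hyy : inv (e ≫ k) ≫ inv (e ≫ k) = inv (e ≫ k) := by
    conv_lhs => rw [← hz]
    calc (k ≫ inv (e ≫ k) ≫ e) ≫ k ≫ inv (e ≫ k) ≫ e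
        = k ≫ (inv (e ≫ k) ≫ (e ≫ k) ≫ inv (e ≫ k)) ≫ e := by simp only [Category.assoc]
      _ = k ≫ inv (e ≫ k) ≫ e := by rw [gi2 hinv]
      _ = inv (e ≫ k) := hz
  have hx : e ≫ k = inv (e ≫ k) :=
    (inv_inv hinv (e ≫ k)).symm.trans (inv_idem hinv _ hyy)
  rw [hx]; exact hyy

theorem idem_comm (hinv : IsInverseOp inv) {A : C} (e k : A ⟶ A) (he : e ≫ e = e) (hk : k ≫ k = k) :
    e ≫ k = k ≫ e := by
  have h1 := idem_comp hinv e k he hk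
  have h2 := idem_comp hinv k e hk he
  have h3 : k ≫ e = inv (e ≫ k) := by
    apply inv_uniq hinv
    · calc (e ≫ k) ≫ (k ≫ e) ≫ e ≫ k
          = e ≫ (k ≫ k) ≫ (e ≫ e) ≫ k := by simp only [Category.assoc]
        _ = (e ≫ k) ≫ e ≫ k := by rw [hk, he]; simp only [Category.assoc]
        _ = e ≫ k := h1
    · calc (k ≫ e) ≫ (e ≫ k) ≫ k ≫ e
          = k ≫ (e ≫ e) ≫ (k ≫ k) ≫ e := by simp only [Category.assoc]
        _ = (k ≫ e) ≫ k ≫ e := by rw [he, hk]; simp only [Category.assoc]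
        _ = k ≫ e := h2
  rw [h3, inv_idem hinv _ h1]

theorem meet_iff (hinv : IsInverseOp inv) {A X : C} (e k : A ⟶ A) (he : e ≫ e = e) (hk : k ≫ k = k)
    (hcomm : e ≫ k = k ≫ e) (y : X ⟶ A) :
    y ≫ (e ≫ k) = y ↔ (y ≫ e = y ∧ y ≫ k = y) := by
  constructor
  · intro h
    have h2 : (y ≫ e ≫ k) ≫ e = y ≫ e ≫ k := by
      simp only [Category.assoc, ← hcomm]
      rw [← Category.assoc e e k, he]
    have h3 : (y ≫ e ≫ k) ≫ k = y ≫ e ≫ k := by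
      simp only [Category.assoc]
      rw [hk]
    constructor
    · calc y ≫ e = (y ≫ e ≫ k) ≫ e := by rw [h]
        _ = y ≫ e ≫ k := h2
        _ = y := h
    · calc y ≫ k = (y ≫ e ≫ k) ≫ k := by rw [h]
        _ = y ≫ e ≫ k := h3
        _ = y := h
  · rintro ⟨h1, h2⟩
    rw [← Category.assoc, h1, h2]

end Inverse

section Baer

variable [HasZeroObject C] [HasZeroMorphisms C]
variable {inv : MorphismOp C}

theorem prj_idem (Bs : BaerStar C inv) {A B : C} (f : A ⟶ B) : Bs.prj f ≫ Bs.prj f = Bs.prj f :=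
  (Bs.prj_isProjection f).1

theorem prj_f_zero (Bs : BaerStar C inv) {A B : C} (f : A ⟶ B) : Bs.prj f ≫ f = 0 :=
  (Bs.prj_spec f (Bs.prj f)).mpr ⟨𝟙 A, (Category.id_comp _).symm⟩

theorem factor_iff (Bs : BaerStar C inv) {A B X : C} (f : A ⟶ B) (g : X ⟶ A) :
    g ≫ f = 0 ↔ g ≫ Bs.prj f = g := by
  constructor
  · intro h0
    obtain ⟨h, hh⟩ := (Bs.prj_spec f g).mp h0
    rw [hh, Category.assoc, prj_idem Bs f]
  · intro h
    rw [← h, Category.assoc, prj_f_zero Bs f, comp_zero]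

theorem prj_zero (Bs : BaerStar C inv) {A B : C} : Bs.prj (0 : A ⟶ B) = 𝟙 A := by
  have h : 𝟙 A ≫ Bs.prj (0 : A ⟶ B) = 𝟙 A := (factor_iff Bs 0 (𝟙 A)).mp (comp_zero)
  rw [← Category.id_comp (Bs.prj (0 : A ⟶ B)), h]

theorem prj_eq_of_ann (hinv : IsInverseOp inv) (Bs : BaerStar C inv) {A B : C} (f : A ⟶ B) (e : A ⟶ A) (he : e ≫ e = e)
    (h : ∀ {X : C} (g : X ⟶ A), g ≫ f = 0 ↔ g ≫ e = g) : e = Bs.prj f := by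
  have h1 : e ≫ Bs.prj f = e := (factor_iff Bs f e).mp ((h e).mpr he)
  have h2 : Bs.prj f ≫ e = Bs.prj f := (h (Bs.prj f)).mp (prj_f_zero Bs f)
  have hcomm := idem_comm hinv e (Bs.prj f) he (prj_idem Bs f)
  rw [← h1, hcomm, h2]

theorem prj_prj_zero (hinv : IsInverseOp inv) (Bs : BaerStar C inv) {A B : C} (f : A ⟶ B) :
    Bs.prj f ≫ Bs.prj (Bs.prj f) = 0 := by
  rw [idem_comm hinv (Bs.prj f) (Bs.prj (Bs.prj f)) (prj_idem Bs f) (prj_idem Bs _)]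
  exact prj_f_zero Bs (Bs.prj f)

theorem prj3 (hinv : IsInverseOp inv) (Bs : BaerStar C inv) {A B : C} (f : A ⟶ B) :
    Bs.prj (Bs.prj (Bs.prj f)) = Bs.prj f := by
  have ha : Bs.prj f ≫ Bs.prj f = Bs.prj f := prj_idem Bs f
  have hp3 : Bs.prj (Bs.prj (Bs.prj f)) ≫ Bs.prj (Bs.prj (Bs.prj f)) =
      Bs.prj (Bs.prj (Bs.prj f)) := prj_idem Bs _
  -- a ≤ p3
  have h2 : Bs.prj f ≫ Bs.prj (Bs.prj (Bs.prj f)) = Bs.prj f :=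
    (factor_iff Bs (Bs.prj (Bs.prj f)) (Bs.prj f)).mp (prj_prj_zero hinv Bs f)
  -- p2 ≫ f = f
  have hr : (f ≫ inv f) ≫ f ≫ inv f = f ≫ inv f := by
    simp only [Category.assoc]
    rw [gi2 hinv]
  have hra : (f ≫ inv f) ≫ Bs.prj f = 0 := by
    rw [← idem_comm hinv (Bs.prj f) (f ≫ inv f) (prj_idem Bs f) hr]
    rw [← Category.assoc, prj_f_zero Bs f, zero_comp]
  have hrp2 : (f ≫ inv f) ≫ Bs.prj (Bs.prj f) = f ≫ inv f :=
    (factor_iff Bs (Bs.prj f) (f ≫ inv f)).mp hra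
  have hp2r : Bs.prj (Bs.prj f) ≫ f ≫ inv f = f ≫ inv f := by
    rw [← idem_comm hinv (f ≫ inv f) (Bs.prj (Bs.prj f)) hr (prj_idem Bs _)]
    exact hrp2
  have hp2f : Bs.prj (Bs.prj f) ≫ f = f := by
    calc Bs.prj (Bs.prj f) ≫ f = Bs.prj (Bs.prj f) ≫ f ≫ inv f ≫ f := by rw [gi1 hinv f]
      _ = (Bs.prj (Bs.prj f) ≫ f ≫ inv f) ≫ f := by simp only [Category.assoc]
      _ = (f ≫ inv f) ≫ f := by rw [hp2r]
      _ = f := by rw [Category.assoc, gi1 hinv f]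
  -- p3 ≤ a
  have hp3f : Bs.prj (Bs.prj (Bs.prj f)) ≫ f = 0 := by
    calc Bs.prj (Bs.prj (Bs.prj f)) ≫ f
        = Bs.prj (Bs.prj (Bs.prj f)) ≫ Bs.prj (Bs.prj f) ≫ f := by rw [hp2f]
      _ = (Bs.prj (Bs.prj (Bs.prj f)) ≫ Bs.prj (Bs.prj f)) ≫ f := by rw [Category.assoc]
      _ = 0 := by rw [prj_f_zero Bs (Bs.prj (Bs.prj f)), zero_comp]
  have h5 : Bs.prj (Bs.prj (Bs.prj f)) ≫ Bs.prj f = Bs.prj (Bs.prj (Bs.prj f)) :=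
    (factor_iff Bs f _).mp hp3f
  rw [← h5, idem_comm hinv _ (Bs.prj f) hp3 ha, h2]

theorem closed (hinv : IsInverseOp inv) (Bs : BaerStar C inv) (hC : IsExactCategory C) {A : C} (j : A ⟶ A) (hj : j ≫ j = j) :
    ∃ (D : C) (f : A ⟶ D), j = Bs.prj f := by
  obtain ⟨I, e, m, he, hm, hem⟩ := hC.monoEpiFact j
  have hmem : m ≫ e ≫ m = m := by
    have h1 : e ≫ m ≫ e ≫ m = e ≫ m := by
      have h0 := hj
      rw [← hem] at h0
      simpa only [Category.assoc] using h0
    exact (cancel_epi e).mp h1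
  obtain ⟨D, g, hker⟩ := hC.normal m hm
  refine ⟨D, g, prj_eq_of_ann hinv Bs g j hj ?_⟩
  intro X x
  constructor
  · intro h0
    obtain ⟨h, hh, -⟩ := hker.2 x h0
    rw [← hh, ← hem, Category.assoc, hmem]
  · intro hxj
    rw [← hxj, ← hem]
    simp only [Category.assoc]
    rw [hker.1, comp_zero, comp_zero]

theorem lemC (hinv : IsInverseOp inv) (Bs : BaerStar C inv) (hC : IsExactCategory C) {A : C} (j : A ⟶ A) (hj : j ≫ j = j)
    {X : C} (x : X ⟶ A) : x ≫ Bs.prj j = 0 ↔ x ≫ j = x := by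
  obtain ⟨D, f, rfl⟩ := closed hinv Bs hC j hj
  constructor
  · intro h0
    have h1 := (factor_iff Bs (Bs.prj (Bs.prj f)) x).mp h0
    rw [prj3 hinv Bs f] at h1
    exact h1
  · intro h
    rw [← h, Category.assoc, prj_prj_zero hinv Bs f, comp_zero]

end Baer

end Stmt15Aux

open Stmt15Aux in
/-- In an exact inverse category, `P′(f)` is a homomorphism of meet
semilattices of projections, is order preserving, satisfies `f′ ≤ P′(f)(j)` for every
projection `j` on `B`, and `P′(f)(j) = 1` whenever `f ∘ f* ≤ j`. -/
theorem stmt15 [HasZeroObject C] [HasZeroMorphisms C] (inv : MorphismOp C)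
    (hinv : IsInverseOp inv) (hC : IsExactCategory C) (Bs : BaerStar C inv)
    {A B : C} (f : A ⟶ B) :
    (∀ j₁ j₂ : B ⟶ B, IsProjection inv j₁ → IsProjection inv j₂ →
      Bs.prj (f ≫ Bs.prj (j₁ ≫ j₂)) =
        Bs.prj (f ≫ Bs.prj j₁) ≫ Bs.prj (f ≫ Bs.prj j₂)) ∧
    (∀ j₁ j₂ : B ⟶ B, IsProjection inv j₁ → IsProjection inv j₂ → ProjLe j₁ j₂ →
      ProjLe (Bs.prj (f ≫ Bs.prj j₁)) (Bs.prj (f ≫ Bs.prj j₂))) ∧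
    (∀ j : B ⟶ B, IsProjection inv j → ProjLe (Bs.prj f) (Bs.prj (f ≫ Bs.prj j))) ∧
    (∀ j : B ⟶ B, IsProjection inv j → ProjLe (inv f ≫ f) j →
      Bs.prj (f ≫ Bs.prj j) = 𝟙 A) := by
  have prop1 : ∀ j₁ j₂ : B ⟶ B, j₁ ≫ j₁ = j₁ → j₂ ≫ j₂ = j₂ →
      Bs.prj (f ≫ Bs.prj (j₁ ≫ j₂)) =
        Bs.prj (f ≫ Bs.prj j₁) ≫ Bs.prj (f ≫ Bs.prj j₂) := by
    intro j₁ j₂ hj1 hj2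
    have hcj : (j₁ ≫ j₂) ≫ j₁ ≫ j₂ = j₁ ≫ j₂ := idem_comp hinv j₁ j₂ hj1 hj2
    have he1 := prj_idem Bs (f ≫ Bs.prj j₁)
    have he2 := prj_idem Bs (f ≫ Bs.prj j₂)
    have hcomm := idem_comm hinv (Bs.prj (f ≫ Bs.prj j₁)) (Bs.prj (f ≫ Bs.prj j₂)) he1 he2
    have hee := idem_comp hinv (Bs.prj (f ≫ Bs.prj j₁)) (Bs.prj (f ≫ Bs.prj j₂)) he1 he2
    have main : ∀ {X : C} (g : X ⟶ A), g ≫ (f ≫ Bs.prj (j₁ ≫ j₂)) = 0 ↔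
        (g ≫ Bs.prj (f ≫ Bs.prj j₁) = g ∧ g ≫ Bs.prj (f ≫ Bs.prj j₂) = g) := by
      intro X g
      rw [← Category.assoc]
      rw [lemC hinv Bs hC (j₁ ≫ j₂) hcj (g ≫ f)]
      rw [meet_iff hinv j₁ j₂ hj1 hj2 (idem_comm hinv j₁ j₂ hj1 hj2) (g ≫ f)]
      rw [← lemC hinv Bs hC j₁ hj1 (g ≫ f), ← lemC hinv Bs hC j₂ hj2 (g ≫ f)]
      rw [Category.assoc, Category.assoc]
      rw [factor_iff Bs (f ≫ Bs.prj j₁) g, factor_iff Bs (f ≫ Bs.prj j₂) g]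
    symm
    apply prj_eq_of_ann hinv Bs (f ≫ Bs.prj (j₁ ≫ j₂)) _ hee
    intro X g
    exact (main g).trans
      (meet_iff hinv (Bs.prj (f ≫ Bs.prj j₁)) (Bs.prj (f ≫ Bs.prj j₂)) he1 he2 hcomm g).symm
  refine ⟨fun j₁ j₂ h1 h2 => prop1 j₁ j₂ h1.1 h2.1, ?_, ?_, ?_⟩
  · -- part (ii)
    intro j₁ j₂ h1 h2 hle
    have hj1 := h1.1
    have hj2 := h2.1
    have h12 : j₁ ≫ j₂ = j₁ := by
      rw [idem_comm hinv j₁ j₂ hj1 hj2]; exact hle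
    have hp := prop1 j₁ j₂ hj1 hj2
    rw [h12] at hp
    show Bs.prj (f ≫ Bs.prj j₂) ≫ Bs.prj (f ≫ Bs.prj j₁) = Bs.prj (f ≫ Bs.prj j₁)
    rw [← idem_comm hinv (Bs.prj (f ≫ Bs.prj j₁)) (Bs.prj (f ≫ Bs.prj j₂))
      (prj_idem Bs _) (prj_idem Bs _)]
    exact hp.symm
  · -- part (iii)
    intro j hj
    have h0 : Bs.prj f ≫ f ≫ Bs.prj j = 0 := by
      rw [← Category.assoc, prj_f_zero Bs f, zero_comp]
    have h1 : Bs.prj f ≫ Bs.prj (f ≫ Bs.prj j) = Bs.prj f :=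
      (factor_iff Bs (f ≫ Bs.prj j) (Bs.prj f)).mp h0
    show Bs.prj (f ≫ Bs.prj j) ≫ Bs.prj f = Bs.prj f
    rw [← idem_comm hinv (Bs.prj f) (Bs.prj (f ≫ Bs.prj j)) (prj_idem Bs f) (prj_idem Bs _)]
    exact h1
  · -- part (iv)
    intro j hj hle
    have hifif : (inv f ≫ f) ≫ inv f ≫ f = inv f ≫ f := by
      simp only [Category.assoc]
      rw [gi1 hinv f]
    have h1 : (inv f ≫ f) ≫ j = inv f ≫ f := by
      rw [← idem_comm hinv j (inv f ≫ f) hj.1 hifif]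
      exact hle
    have h2 : (inv f ≫ f) ≫ Bs.prj j = 0 :=
      (lemC hinv Bs hC j hj.1 (inv f ≫ f)).mpr h1
    have h3 : f ≫ Bs.prj j = 0 := by
      conv_lhs => rw [← gi1 hinv f]
      simp only [Category.assoc]
      rw [← Category.assoc (inv f) f (Bs.prj j), h2, comp_zero]
    rw [h3, prj_zero Bs]
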